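/- Let n ≥ 2 and let w = PE be a word over Σ_n = {1,…,n} satisfying the Pansiot condition, where q = |P| ≥ 1, |E| ≥ n−1, and w has period q. Then the Pansiot encoding b(w) has period q, and σ_n(c) is the identity permutation, where c is the prefix of b(w) of length q. (Thus b(w) is a kernel repetition of period q.) -/

import Mathlib

/-- The finite word `u` has period `q`: `u_i = u_{i+q}` for all valid indices. -/
def HasPeriodL {α : Type*} (u : List α) (q : ℕ) : Prop :=
  ∀ i, i + q < u.length → u[i]? = u[i + q]?


/-- The images of the letters 0 and 1 under the Pansiot map `σ_n` (on `Fin n`, where the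
value `k` represents the letter `k+1` of `Σ_n = {1,…,n}`): `σ_n(0)` sends the letter
`i ↦ i+1` for `1 ≤ i ≤ n−2`, sends `n−1 ↦ 1` and fixes `n`; `σ_n(1)` is the `n`-cycle
`i ↦ i+1 (mod n)`. -/
def sigmaLetter (n : ℕ) : Bool → Equiv.Perm (Fin n)
  | true => finRotate n
  | false => if h : 1 ≤ n then Equiv.swap ⟨n - 1, by omega⟩ ⟨0, by omega⟩ * finRotate n else 1

/-- The monoid homomorphism `σ_n` on binary words (`σ_n(uw) = σ_n(u) ∘ σ_n(w)`). -/
def sigmaW (n : ℕ) (w : List Bool) : Equiv.Perm (Fin n) :=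
  (w.map (sigmaLetter n)).prod

/-- The Pansiot condition: every factor of `v` of length `n-1` consists of `n-1`
pairwise distinct letters. -/
def PansiotCond (n : ℕ) (v : List (Fin n)) : Prop :=
  ∀ i, i + (n - 1) ≤ v.length → ((v.drop i).take (n - 1)).Nodup

/-- The Pansiot encoding `b(v)` of a word `v` over `Σ_n`: a binary word of length
`|v| - (n-1)` whose `i`-th letter (0-indexed) is `0` iff `v_i = v_{i+n-1}`. -/
def pEncode (n : ℕ) (v : List (Fin n)) : List Bool :=
  (List.range (v.length + 1 - n)).map fun i => decide (v[i]? ≠ v[i + (n - 1)]?)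


/-- If `w = PE` satisfies the Pansiot condition, `q = |P| ≥ 1`, `|E| ≥ n-1` and `w` has
period `q`, then the Pansiot encoding `b(w)` has period `q` and `σ_n` applied to the
prefix of `b(w)` of length `q` is the identity: `b(w)` is a kernel repetition of period `q`. -/
noncomputable def missL (n : ℕ) (hn : 0 < n) (l : List (Fin n)) : Fin n :=
  ((Finset.univ \ l.toFinset).toList).headD ⟨0, hn⟩

theorem missL_spec (n : ℕ) (hn : 0 < n) (l : List (Fin n)) (hnd : l.Nodup)
    (hlen : l.length = n - 1) :
    missL n hn l ∉ l ∧ ∀ x : Fin n, x ∉ l → x = missL n hn l := by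
  have hcard : (Finset.univ \ l.toFinset).card = 1 := by
    rw [Finset.card_sdiff_of_subset (Finset.subset_univ _)]
    rw [List.toFinset_card_of_nodup hnd, hlen]
    simp only [Finset.card_univ, Fintype.card_fin]
    omega
  obtain ⟨m, hm⟩ := Finset.card_eq_one.mp hcard
  have hmiss : missL n hn l = m := by
    unfold missL
    rw [hm, Finset.toList_singleton]
    rfl
  constructor
  · rw [hmiss]
    have : m ∈ Finset.univ \ l.toFinset := by rw [hm]; exact Finset.mem_singleton_self m
    simpa using this
  · intro x hx
    have : x ∈ Finset.univ \ l.toFinset := by simpa using hx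
    rw [hm, Finset.mem_singleton] at this
    rw [hmiss, this]

def pwin (n : ℕ) (w : List (Fin n)) (i : ℕ) : List (Fin n) := (w.drop i).take (n - 1)

theorem pwin_length (n : ℕ) (w : List (Fin n)) (i : ℕ) (hi : i + (n - 1) ≤ w.length) :
    (pwin n w i).length = n - 1 := by
  simp [pwin]; omega

theorem pwin_getElem (n : ℕ) (hn : 0 < n) (w : List (Fin n)) (i k : ℕ)
    (hi : i + (n - 1) ≤ w.length) (hk : k < n - 1) :
    (pwin n w i)[k]'(by rw [pwin_length n w i hi]; exact hk) = w.getD (i + k) ⟨0, hn⟩ := by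
  unfold pwin
  rw [List.getElem_take, List.getElem_drop, List.getD_eq_getElem w _ (by omega)]

theorem getD_mem_pwin (n : ℕ) (hn : 0 < n) (w : List (Fin n)) (i k : ℕ)
    (hi : i + (n - 1) ≤ w.length) (hk : k < n - 1) :
    w.getD (i + k) ⟨0, hn⟩ ∈ pwin n w i := by
  rw [← pwin_getElem n hn w i k hi hk]
  exact List.getElem_mem _

theorem mem_pwin (n : ℕ) (hn : 0 < n) (w : List (Fin n)) (i : ℕ) (x : Fin n)
    (hi : i + (n - 1) ≤ w.length) (hx : x ∈ pwin n w i) :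
    ∃ k < n - 1, w.getD (i + k) ⟨0, hn⟩ = x := by
  obtain ⟨k, hk, hkx⟩ := List.getElem_of_mem hx
  rw [pwin_length n w i hi] at hk
  exact ⟨k, hk, by rw [← pwin_getElem n hn w i k hi hk, hkx]⟩

theorem window_ne (n : ℕ) (hn : 0 < n) (w : List (Fin n)) (hP : ∀ i, i + (n - 1) ≤ w.length → ((w.drop i).take (n - 1)).Nodup)
    (i k k' : ℕ) (hi : i + (n - 1) ≤ w.length) (hkk : k < k') (hk' : k' < n - 1) :
    w.getD (i + k) ⟨0, hn⟩ ≠ w.getD (i + k') ⟨0, hn⟩ := by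
  have hnd : (pwin n w i).Nodup := hP i hi
  rw [List.nodup_iff_getElem?_ne_getElem?] at hnd
  have := hnd k k' hkk (by rw [pwin_length n w i hi]; exact hk')
  rw [List.getElem?_eq_getElem (by rw [pwin_length n w i hi]; omega),
      List.getElem?_eq_getElem (by rw [pwin_length n w i hi]; omega)] at this
  rw [pwin_getElem n hn w i k hi (by omega), pwin_getElem n hn w i k' hi hk'] at this
  simpa using this

theorem rotVal (n : ℕ) (j : Fin n) :
    ((finRotate n j : Fin n) : ℕ) = if (j : ℕ) = n - 1 then 0 else (j : ℕ) + 1 := by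
  cases n with
  | zero => exact absurd j.2 (by omega)
  | succ m =>
    rw [finRotate_succ_apply, Fin.val_add_one]
    rcases eq_or_ne j (Fin.last m) with h | h
    · rw [if_pos h, if_pos (by simp [h])]
    · rw [if_neg h, if_neg (by simpa [Fin.ext_iff] using h)]

theorem sigT (n : ℕ) (j : Fin n) :
    ((sigmaLetter n true j : Fin n) : ℕ) = if (j : ℕ) = n - 1 then 0 else (j : ℕ) + 1 :=
  rotVal n j

theorem sigF (n : ℕ) (hn : 2 ≤ n) (j : Fin n) :
    ((sigmaLetter n false j : Fin n) : ℕ) =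
      if (j : ℕ) = n - 1 then n - 1 else if (j : ℕ) = n - 2 then 0 else (j : ℕ) + 1 := by
  have h1 : 1 ≤ n := by omega
  have hEq : sigmaLetter n false =
      Equiv.swap (⟨n - 1, by omega⟩ : Fin n) ⟨0, by omega⟩ * finRotate n := by
    simp [sigmaLetter, h1]
  rw [hEq, Equiv.Perm.mul_apply]
  rcases eq_or_ne (j : ℕ) (n - 1) with h | h
  · have hrot : (finRotate n j : Fin n) = (⟨0, by omega⟩ : Fin n) := by
      apply Fin.ext
      show ((finRotate n j : Fin n) : ℕ) = 0
      rw [rotVal, if_pos h]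
    rw [hrot, Equiv.swap_apply_right, if_pos h]
  · rcases eq_or_ne (j : ℕ) (n - 2) with h2 | h2
    · have hrot : (finRotate n j : Fin n) = (⟨n - 1, by omega⟩ : Fin n) := by
        apply Fin.ext
        show ((finRotate n j : Fin n) : ℕ) = n - 1
        rw [rotVal, if_neg h]
        omega
      rw [hrot, Equiv.swap_apply_left, if_neg h, if_pos h2]
    · have hv : ((finRotate n j : Fin n) : ℕ) = (j : ℕ) + 1 := by rw [rotVal, if_neg h]
      rw [Equiv.swap_apply_of_ne_of_ne, if_neg h, if_neg h2]
      · exact hv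
      · simp only [ne_eq, Fin.ext_iff, hv]; omega
      · simp only [ne_eq, Fin.ext_iff, hv]; omega

noncomputable def pfun (n : ℕ) (hn : 0 < n) (w : List (Fin n)) (i : ℕ) : Fin n → Fin n :=
  fun j => if (j : ℕ) < n - 1 then w.getD (i + (j : ℕ)) ⟨0, hn⟩ else missL n hn (pwin n w i)

theorem pfun_step (n : ℕ) (hn : 2 ≤ n) (hn0 : 0 < n) (w : List (Fin n))
    (hP : ∀ i, i + (n - 1) ≤ w.length → ((w.drop i).take (n - 1)).Nodup)
    (i : ℕ) (hi : i + 1 + (n - 1) ≤ w.length) :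
    pfun n hn0 w (i + 1) = pfun n hn0 w i ∘
      (sigmaLetter n (decide (w.getD i ⟨0, hn0⟩ ≠ w.getD (i + (n - 1)) ⟨0, hn0⟩))) := by
  have hii : i + (n - 1) ≤ w.length := by omega
  have hP' : ∀ k, k + (n - 1) ≤ w.length → (pwin n w k).Nodup := hP
  obtain ⟨mi_not, mi_uniq⟩ := missL_spec n hn0 _ (hP' i hii) (pwin_length n w i hii)
  obtain ⟨m1_not, m1_uniq⟩ := missL_spec n hn0 _ (hP' (i+1) hi) (pwin_length n w (i+1) hi)
  funext j
  rcases eq_or_ne (w.getD i ⟨0, hn0⟩) (w.getD (i + (n - 1)) ⟨0, hn0⟩) with hb | hb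
  · -- letter is 0 (false): w_i = w_{i+n-1}
    have hdec : decide (w.getD i ⟨0, hn0⟩ ≠ w.getD (i + (n - 1)) ⟨0, hn0⟩) = false :=
      decide_eq_false (not_not_intro hb)
    rw [hdec]
    have hmiss : missL n hn0 (pwin n w (i+1)) = missL n hn0 (pwin n w i) := by
      symm
      apply m1_uniq
      intro hmem
      obtain ⟨k, hk, hkeq⟩ := mem_pwin n hn0 w (i+1) _ hi hmem
      rcases eq_or_ne k (n-2) with hk2 | hk2
      · apply mi_not
        rw [show i+1+k = i + (n-1) by omega, ← hb] at hkeq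
        rw [← hkeq]
        have := getD_mem_pwin n hn0 w i 0 hii (by omega)
        simpa using this
      · apply mi_not
        rw [show i+1+k = i + (k+1) by omega] at hkeq
        rw [← hkeq]
        exact getD_mem_pwin n hn0 w i (k+1) hii (by omega)
    simp only [Function.comp_apply, pfun]
    have ht := sigF n hn (j := j)
    by_cases hj : (j : ℕ) = n - 1
    · have htv : ((sigmaLetter n false j : Fin n) : ℕ) = n - 1 := by rw [ht, if_pos hj]
      rw [if_neg (by omega), if_neg (by omega)]
      exact hmiss
    · by_cases hj2 : (j : ℕ) = n - 2
      · have htv : ((sigmaLetter n false j : Fin n) : ℕ) = 0 := by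
          rw [ht, if_neg hj, if_pos hj2]
        rw [if_pos (by omega), if_pos (by omega),
          show i + 1 + (j : ℕ) = i + (n - 1) by omega,
          show i + ((sigmaLetter n false j : Fin n) : ℕ) = i by omega]
        exact hb.symm
      · have htv : ((sigmaLetter n false j : Fin n) : ℕ) = (j : ℕ) + 1 := by
          rw [ht, if_neg hj, if_neg hj2]
        rw [if_pos (by omega), if_pos (by omega),
          show i + ((sigmaLetter n false j : Fin n) : ℕ) = i + 1 + (j : ℕ) by omega]
  · -- letter is 1 (true): w_i ≠ w_{i+n-1}
    have hdec : decide (w.getD i ⟨0, hn0⟩ ≠ w.getD (i + (n - 1)) ⟨0, hn0⟩) = true :=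
      decide_eq_true hb
    rw [hdec]
    have hA : w.getD (i + (n - 1)) ⟨0, hn0⟩ = missL n hn0 (pwin n w i) := by
      apply mi_uniq
      intro hmem
      obtain ⟨k, hk, hkeq⟩ := mem_pwin n hn0 w i _ hii hmem
      rcases Nat.eq_zero_or_pos k with rfl | hk0
      · rw [show i + 0 = i by omega] at hkeq
        exact hb hkeq
      · have hne := window_ne n hn0 w hP (i+1) (k-1) (n-2) hi (by omega) (by omega)
        rw [show i+1+(k-1) = i + k by omega, show i+1+(n-2) = i + (n-1) by omega] at hne
        exact hne hkeq
    have hB : w.getD i ⟨0, hn0⟩ = missL n hn0 (pwin n w (i+1)) := by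
      apply m1_uniq
      intro hmem
      obtain ⟨k, hk, hkeq⟩ := mem_pwin n hn0 w (i+1) _ hi hmem
      rcases eq_or_ne k (n-2) with hk2 | hk2
      · rw [show i+1+k = i + (n-1) by omega] at hkeq
        exact hb hkeq.symm
      · have hne := window_ne n hn0 w hP i 0 (k+1) hii (by omega) (by omega)
        rw [show i + 0 = i by omega, show i + (k+1) = i+1+k by omega] at hne
        exact hne hkeq.symm
    simp only [Function.comp_apply, pfun]
    have ht := sigT n (j := j)
    by_cases hj : (j : ℕ) = n - 1
    · have htv : ((sigmaLetter n true j : Fin n) : ℕ) = 0 := by rw [ht, if_pos hj]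
      rw [if_neg (by omega), if_pos (by omega),
        show i + ((sigmaLetter n true j : Fin n) : ℕ) = i by omega]
      exact hB.symm
    · by_cases hj2 : (j : ℕ) = n - 2
      · have htv : ((sigmaLetter n true j : Fin n) : ℕ) = n - 1 := by
          rw [ht, if_neg hj]; omega
        rw [if_pos (by omega), if_neg (by omega),
          show i + 1 + (j : ℕ) = i + (n - 1) by omega]
        exact hA
      · have htv : ((sigmaLetter n true j : Fin n) : ℕ) = (j : ℕ) + 1 := by
          rw [ht, if_neg hj]
        rw [if_pos (by omega), if_pos (by omega),
          show i + ((sigmaLetter n true j : Fin n) : ℕ) = i + 1 + (j : ℕ) by omega]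

theorem pEncode_length (n : ℕ) (v : List (Fin n)) :
    (pEncode n v).length = v.length + 1 - n := by simp [pEncode]

theorem pEncode_getElem? (n : ℕ) (hn0 : 0 < n) (v : List (Fin n)) (i : ℕ)
    (hi : i < v.length + 1 - n) :
    (pEncode n v)[i]? =
      some (decide (v.getD i ⟨0, hn0⟩ ≠ v.getD (i + (n - 1)) ⟨0, hn0⟩)) := by
  have h1 : i < v.length := by omega
  have h2 : i + (n - 1) < v.length := by omega
  unfold pEncode
  rw [List.getElem?_map, List.getElem?_range hi]
  simp only [Option.map_some]
  congr 1
  rw [decide_eq_decide]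
  rw [List.getElem?_eq_getElem h1, List.getElem?_eq_getElem h2,
    List.getD_eq_getElem v _ h1, List.getD_eq_getElem v _ h2]
  simp

theorem sigmaW_append_singleton (n : ℕ) (l : List Bool) (x : Bool) :
    sigmaW n (l ++ [x]) = sigmaW n l * sigmaLetter n x := by
  simp [sigmaW]

theorem pfun_iter (n : ℕ) (hn : 2 ≤ n) (hn0 : 0 < n) (w : List (Fin n))
    (hP : ∀ i, i + (n - 1) ≤ w.length → ((w.drop i).take (n - 1)).Nodup) :
    ∀ i, i + (n - 1) ≤ w.length →
      pfun n hn0 w i = pfun n hn0 w 0 ∘ ⇑(sigmaW n ((pEncode n w).take i)) := by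
  intro i
  induction i with
  | zero =>
    intro _
    simp [sigmaW]
  | succ k ih =>
    intro hk
    have hk' : k + (n - 1) ≤ w.length := by omega
    rw [pfun_step n hn hn0 w hP k hk, ih hk', List.take_succ,
      pEncode_getElem? n hn0 w k (by omega)]
    rw [show ((some (decide (w.getD k ⟨0, hn0⟩ ≠ w.getD (k + (n - 1)) ⟨0, hn0⟩))).toList)
        = [decide (w.getD k ⟨0, hn0⟩ ≠ w.getD (k + (n - 1)) ⟨0, hn0⟩)] from rfl,
      sigmaW_append_singleton, Equiv.Perm.coe_mul]
    rfl

theorem pfun_inj (n : ℕ) (hn : 2 ≤ n) (hn0 : 0 < n) (w : List (Fin n))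
    (hP : ∀ i, i + (n - 1) ≤ w.length → ((w.drop i).take (n - 1)).Nodup)
    (i : ℕ) (hi : i + (n - 1) ≤ w.length) :
    Function.Injective (pfun n hn0 w i) := by
  obtain ⟨mi_not, _⟩ := missL_spec n hn0 _ (hP i hi) (pwin_length n w i hi)
  intro a b hab
  simp only [pfun] at hab
  by_cases ha : (a : ℕ) < n - 1 <;> by_cases hb : (b : ℕ) < n - 1
  · rw [if_pos ha, if_pos hb] at hab
    rcases lt_trichotomy (a : ℕ) (b : ℕ) with h | h | h
    · exact absurd hab (window_ne n hn0 w hP i a b hi h hb)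
    · exact Fin.ext h
    · exact absurd hab.symm (window_ne n hn0 w hP i b a hi h ha)
  · rw [if_pos ha, if_neg hb] at hab
    exact absurd (hab ▸ getD_mem_pwin n hn0 w i a hi ha) mi_not
  · rw [if_neg ha, if_pos hb] at hab
    exact absurd (hab ▸ getD_mem_pwin n hn0 w i b hi hb) mi_not
  · exact Fin.ext (by have := a.isLt; have := b.isLt; omega)

theorem pansiot_encode_kernel_repetition (n : ℕ) (hn : 2 ≤ n) (P E : List (Fin n))
    (hP : 1 ≤ P.length) (hE : n - 1 ≤ E.length)
    (hPansiot : PansiotCond n (P ++ E))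
    (hper : HasPeriodL (P ++ E) P.length) :
    HasPeriodL (pEncode n (P ++ E)) P.length ∧
      sigmaW n ((pEncode n (P ++ E)).take P.length) = 1 := by
  have hn0 : 0 < n := by omega
  set w : List (Fin n) := P ++ E with hw
  set q : ℕ := P.length with hq'
  have hL : w.length = q + E.length := by simp [hw, hq']
  have hq : q + (n - 1) ≤ w.length := by omega
  have hP' : ∀ i, i + (n - 1) ≤ w.length → ((w.drop i).take (n - 1)).Nodup := hPansiot
  have hgetD : ∀ k, k + q < w.length →
      w.getD k ⟨0, hn0⟩ = w.getD (k + q) ⟨0, hn0⟩ := by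
    intro k hk
    rw [List.getD_eq_getElem?_getD, List.getD_eq_getElem?_getD, hper k hk]
  constructor
  · intro i hi
    rw [pEncode_length] at hi
    rw [pEncode_getElem? n hn0 w i (by omega), pEncode_getElem? n hn0 w (i + q) (by omega)]
    have e1 := hgetD i (by omega)
    have e2 := hgetD (i + (n - 1)) (by omega)
    rw [show i + (n - 1) + q = i + q + (n - 1) by omega] at e2
    rw [e1, e2]
  · have hiter := pfun_iter n hn hn0 w hP' q hq
    have heq : pfun n hn0 w q = pfun n hn0 w 0 := by
      have hwin : pwin n w q = pwin n w 0 := by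
        apply List.ext_getElem
          (by rw [pwin_length n w q hq, pwin_length n w 0 (by omega)])
        intro k h1 h2
        rw [pwin_length n w q hq] at h1
        rw [pwin_getElem n hn0 w q k hq h1, pwin_getElem n hn0 w 0 k (by omega) h1]
        have := hgetD k (by omega)
        rw [show q + k = k + q by omega, show 0 + k = k by omega, this]
      funext j
      simp only [pfun]
      by_cases hj : (j : ℕ) < n - 1
      · rw [if_pos hj, if_pos hj]
        have := hgetD (j : ℕ) (by omega)
        rw [show q + (j : ℕ) = (j : ℕ) + q by omega, show 0 + (j : ℕ) = (j : ℕ) by omega, this]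
      · rw [if_neg hj, if_neg hj, hwin]
    have hcomp : pfun n hn0 w 0 ∘ ⇑(sigmaW n ((pEncode n w).take q)) = pfun n hn0 w 0 := by
      rw [← hiter, heq]
    apply Equiv.ext
    intro x
    apply pfun_inj n hn hn0 w hP' 0 (by omega)
    have := congrFun hcomp x
    simpa using this
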